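/- Fix an integer d ≥ 75, set ε₀ = √(d−1) and ε₁ = √(d−1) + 1/(d + √(d−1)), and for δ ∈ (ε₀, d) define α(δ) = 2ε₀(d+ε₀)²/((d−δ)(d + 2ε₀ + δ)). Then there exists δ ∈ (ε₀, d) such that for all real ε, x, y, z satisfying ε₀ ≤ ε ≤ ε₁, x ≥ 1/2, 0 ≤ y ≤ 1/2 − z, and 0 ≤ z ≤ 1/(δ−ε₀)², one has (2ε₀)^{x+y+z} · ((ε₀+ε₁)/(2ε₀)) · (ε − ε₀)^x · (α(δ)·(ε₁−ε)/y)^{y/2} · (d − ε₀)^z < 1, where the factor (α(δ)·(ε₁−ε)/y)^{y/2} is interpreted as 1 when y = 0. -/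

import Mathlib

private lemma one_add_le_four_rpow (τ:ℝ) (h : 0 ≤ τ) : 1+τ ≤ (4:ℝ)^(τ:ℝ) := by
  have h4 : (1:ℝ) ≤ Real.log 4 := by
    rw [Real.le_log_iff_exp_le (by norm_num : (0:ℝ) < 4)]
    exact le_trans Real.exp_one_lt_d9.le (by norm_num)
  have hd : (4:ℝ)^(τ:ℝ) = Real.exp (Real.log 4 * τ) := by
    rw [Real.rpow_def_of_pos (by norm_num : (0:ℝ) < 4)]
  rw [hd]
  have := Real.add_one_le_exp (Real.log 4 * τ)
  nlinarith [mul_le_mul_of_nonneg_right h4 h]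

private lemma key2 (y w K : ℝ) (hy : 0 ≤ y) (hw : 0 ≤ w) (hyw : y + w ≤ 1/2) (hK : 6 ≤ K) :
    (1+(y+w)) ^ (1+(y+w) : ℝ) ≤ (1+y) ^ (1+y : ℝ) * K ^ (w : ℝ) := by
  have h1y : (0:ℝ) < 1+y := by linarith
  have h1yw : (0:ℝ) < 1+(y+w) := by linarith
  have hτ : 0 ≤ w/(1+y) := div_nonneg hw h1y.le
  have hsplit : (1+(y+w)) ^ (1+(y+w) : ℝ) = (1+(y+w)) ^ (1+y : ℝ) * (1+(y+w)) ^ (w : ℝ) := by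
    rw [← Real.rpow_add h1yw]
    congr 1
    ring
  have hfac : (1:ℝ)+(y+w) = (1+y)*(1+w/(1+y)) := by field_simp; ring
  have hstep1 : (1+(y+w)) ^ (1+y : ℝ) ≤ (1+y) ^ (1+y : ℝ) * (4:ℝ) ^ (w:ℝ) := by
    have e1 : (1+(y+w)) ^ (1+y : ℝ) = (1+y) ^ (1+y:ℝ) * (1+w/(1+y)) ^ (1+y:ℝ) := by
      rw [hfac, Real.mul_rpow h1y.le (by linarith : (0:ℝ) ≤ 1+w/(1+y))]
    have e2 : (1+w/(1+y)) ^ (1+y:ℝ) ≤ ((4:ℝ)^(w/(1+y):ℝ)) ^ (1+y:ℝ) :=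
      Real.rpow_le_rpow (by linarith) (one_add_le_four_rpow _ hτ) (by linarith)
    have e3 : ((4:ℝ)^(w/(1+y):ℝ)) ^ (1+y:ℝ) = (4:ℝ)^(w:ℝ) := by
      rw [← Real.rpow_mul (by norm_num : (0:ℝ) ≤ 4)]
      congr 1
      field_simp
    rw [e1]
    calc (1+y) ^ (1+y:ℝ) * (1+w/(1+y)) ^ (1+y:ℝ) ≤ (1+y) ^ (1+y:ℝ) * ((4:ℝ)^(w/(1+y):ℝ)) ^ (1+y:ℝ) :=
          mul_le_mul_of_nonneg_left e2 (Real.rpow_nonneg h1y.le _)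
      _ = (1+y) ^ (1+y:ℝ) * (4:ℝ)^(w:ℝ) := by rw [e3]
  have hstep2 : (1+(y+w)) ^ (w : ℝ) ≤ (3/2:ℝ) ^ (w:ℝ) :=
    Real.rpow_le_rpow h1yw.le (by linarith) hw
  calc (1+(y+w)) ^ (1+(y+w) : ℝ) = (1+(y+w)) ^ (1+y : ℝ) * (1+(y+w)) ^ (w : ℝ) := hsplit
    _ ≤ ((1+y) ^ (1+y:ℝ) * (4:ℝ)^(w:ℝ)) * (3/2:ℝ)^(w:ℝ) :=
        mul_le_mul hstep1 hstep2 (Real.rpow_nonneg h1yw.le _) (by positivity)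
    _ = (1+y) ^ (1+y:ℝ) * ((4:ℝ)^(w:ℝ) * (3/2:ℝ)^(w:ℝ)) := by ring
    _ = (1+y) ^ (1+y:ℝ) * (6:ℝ)^(w:ℝ) := by
        rw [← Real.mul_rpow (by norm_num) (by norm_num)]; norm_num
    _ ≤ (1+y) ^ (1+y:ℝ) * K^(w:ℝ) :=
        mul_le_mul_of_nonneg_left (Real.rpow_le_rpow (by norm_num) hK hw) (Real.rpow_nonneg h1y.le _)

private lemma fmono (m K y y' : ℝ) (hm : 0 < m) (hK : 6 ≤ K) (hy : 0 ≤ y) (hyy : y ≤ y') (hy' : y' ≤ 1/2) :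
    (m/(1+y)) ^ ((1:ℝ)/2) * (K/(1+y)) ^ (y/2 : ℝ) ≤ (m/(1+y')) ^ ((1:ℝ)/2) * (K/(1+y')) ^ (y'/2 : ℝ) := by
  have h1y : (0:ℝ) < 1+y := by linarith
  have h1y' : (0:ℝ) < 1+y' := by linarith
  have hK0 : (0:ℝ) < K := by linarith
  have repr : ∀ t:ℝ, 0 ≤ t → (m/(1+t)) ^ ((1:ℝ)/2) * (K/(1+t)) ^ (t/2 : ℝ)
      = m ^ ((1:ℝ)/2) * K ^ (t/2:ℝ) / (1+t) ^ ((1+t)/2 : ℝ) := by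
    intro t ht
    have h1t : (0:ℝ) < 1+t := by linarith
    rw [Real.div_rpow hm.le h1t.le, Real.div_rpow hK0.le h1t.le, div_mul_div_comm,
      ← Real.rpow_add h1t]
    congr 2
    ring
  rw [repr y hy, repr y' (le_trans hy hyy)]
  rw [div_le_div_iff₀ (Real.rpow_pos_of_pos h1y _) (Real.rpow_pos_of_pos h1y' _)]
  have key : K ^ (y/2:ℝ) * (1+y') ^ ((1+y')/2:ℝ) ≤ K ^ (y'/2:ℝ) * (1+y) ^ ((1+y)/2:ℝ) := by
    have h2 := key2 y (y'-y) K hy (by linarith) (by linarith) hK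
    have hyy' : y + (y'-y) = y' := by ring
    rw [hyy'] at h2
    have h3 : ((1+y') ^ ((1+y'):ℝ)) ^ ((1:ℝ)/2) ≤ ((1+y) ^ (1+y : ℝ) * K ^ (y'-y : ℝ)) ^ ((1:ℝ)/2) :=
      Real.rpow_le_rpow (Real.rpow_nonneg h1y'.le _) h2 (by norm_num)
    rw [← Real.rpow_mul h1y'.le,
        Real.mul_rpow (Real.rpow_nonneg h1y.le _) (Real.rpow_nonneg hK0.le _),
        ← Real.rpow_mul h1y.le, ← Real.rpow_mul hK0.le] at h3
    have e1 : (1+y') * ((1:ℝ)/2) = (1+y')/2 := by ring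
    have e2 : (1+y) * ((1:ℝ)/2) = (1+y)/2 := by ring
    have e3 : (y'-y) * ((1:ℝ)/2) = (y'-y)/2 := by ring
    rw [e1, e2, e3] at h3
    calc K ^ (y/2:ℝ) * (1+y') ^ ((1+y')/2:ℝ)
        ≤ K ^ (y/2:ℝ) * ((1+y) ^ ((1+y)/2 : ℝ) * K ^ ((y'-y)/2 : ℝ)) :=
          mul_le_mul_of_nonneg_left h3 (Real.rpow_nonneg hK0.le _)
      _ = (K ^ (y/2:ℝ) * K ^ ((y'-y)/2 : ℝ)) * (1+y) ^ ((1+y)/2 : ℝ) := by ring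
      _ = K ^ (y'/2:ℝ) * (1+y) ^ ((1+y)/2 : ℝ) := by
          rw [← Real.rpow_add hK0]
          congr 2
          ring
  calc m ^ ((1:ℝ)/2) * K ^ (y/2:ℝ) * (1+y') ^ ((1+y')/2:ℝ)
      = m ^ ((1:ℝ)/2) * (K ^ (y/2:ℝ) * (1+y') ^ ((1+y')/2:ℝ)) := by ring
    _ ≤ m ^ ((1:ℝ)/2) * (K ^ (y'/2:ℝ) * (1+y) ^ ((1+y)/2:ℝ)) :=
        mul_le_mul_of_nonneg_left key (Real.rpow_nonneg hm.le _)
    _ = m ^ ((1:ℝ)/2) * K ^ (y'/2:ℝ) * (1+y) ^ ((1+y)/2:ℝ) := by ring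

private lemma amgm (u v y η : ℝ) (hu : 0 ≤ u) (hv : 0 ≤ v) (hy : 0 < y) (hη : u + v = η) (hη0 : 0 < η) :
    u ^ ((1:ℝ)/2) * (v/y) ^ (y/2 : ℝ) ≤ (η/(1+y)) ^ ((1:ℝ)/2) * (η/(1+y)) ^ (y/2 : ℝ) := by
  have h1y : (0:ℝ) < 1+y := by linarith
  have hw1 : (0:ℝ) ≤ 1/(1+y) := by positivity
  have hw2 : (0:ℝ) ≤ y/(1+y) := by positivity
  have hw : 1/(1+y) + y/(1+y) = 1 := by field_simp
  have g := Real.geom_mean_le_arith_mean2_weighted hw1 hw2 hu (div_nonneg hv hy.le) hw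
  have harith : 1/(1+y) * u + y/(1+y) * (v/y) = η/(1+y) := by
    rw [← hη]; field_simp
  rw [harith] at g
  have hc : (0:ℝ) ≤ (1+y)/2 := by linarith
  have g2 : (u ^ (1/(1+y):ℝ) * (v/y) ^ (y/(1+y):ℝ)) ^ ((1+y)/2 : ℝ) ≤ (η/(1+y)) ^ ((1+y)/2 : ℝ) :=
    Real.rpow_le_rpow (mul_nonneg (Real.rpow_nonneg hu _) (Real.rpow_nonneg (div_nonneg hv hy.le) _)) g hc
  have lhs_eq : (u ^ (1/(1+y):ℝ) * (v/y) ^ (y/(1+y):ℝ)) ^ ((1+y)/2 : ℝ)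
      = u ^ ((1:ℝ)/2) * (v/y) ^ (y/2 : ℝ) := by
    have ea : (1/(1+y):ℝ)*((1+y)/2) = 1/2 := by field_simp
    have eb : (y/(1+y):ℝ)*((1+y)/2) = y/2 := by field_simp
    rw [Real.mul_rpow (Real.rpow_nonneg hu _) (Real.rpow_nonneg (div_nonneg hv hy.le) _),
      ← Real.rpow_mul hu, ← Real.rpow_mul (div_nonneg hv hy.le), ea, eb]
  have rhs_eq : (η/(1+y)) ^ ((1+y)/2 : ℝ) = (η/(1+y)) ^ ((1:ℝ)/2) * (η/(1+y)) ^ (y/2 : ℝ) := by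
    rw [← Real.rpow_add (by positivity : (0:ℝ) < η/(1+y))]
    congr 1
    ring
  rw [lhs_eq, rhs_eq] at g2
  exact g2

private lemma prod4_le {a b c d A B C D : ℝ} (ha : 0 ≤ a) (hb : 0 ≤ b) (hc : 0 ≤ c) (hd : 0 ≤ d)
    (hA : a ≤ A) (hB : b ≤ B) (hC : c ≤ C) (hD : d ≤ D) : a*b*c*d ≤ A*B*C*D := by
  have hA0 : 0 ≤ A := le_trans ha hA
  have hB0 : 0 ≤ B := le_trans hb hB
  have hC0 : 0 ≤ C := le_trans hc hC
  have h1 : a*b ≤ A*B := mul_le_mul hA hB hb hA0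
  have h2 : a*b*c ≤ A*B*C := mul_le_mul h1 hC hc (mul_nonneg hA0 hB0)
  exact mul_le_mul h2 hD hd (mul_nonneg (mul_nonneg hA0 hB0) hC0)

private lemma mle (a s:ℝ) (ha : a ≤ s) (ha0 : 8 ≤ a) : 2*s/(s^2+s+1) ≤ 2*a/(a^2+a+1) := by
  rw [div_le_div_iff₀ (by nlinarith) (by nlinarith)]
  nlinarith [mul_nonneg (sub_nonneg.2 ha) (by nlinarith : (0:ℝ) ≤ a*s - 1)]

private lemma Rle (b s:ℝ) (hb : s ≤ b) (ha0 : 8 ≤ s) : 2*s*(s^2-s+1) ≤ 2*b*(b^2-b+1) := by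
  nlinarith [sq_nonneg (s+b), sq_nonneg (s-b), mul_nonneg (sub_nonneg.2 hb) (sq_nonneg s), mul_nonneg (sub_nonneg.2 hb) (sq_nonneg b)]

private lemma c0le (a s:ℝ) (ha : a ≤ s) (ha0 : 8 ≤ a) : 1+1/(2*s*(s^2+s+1)) ≤ 1+1/(2*a*(a^2+a+1)) := by
  have h1 : (0:ℝ) < 2*a*(a^2+a+1) := by nlinarith
  have h2 : 2*a*(a^2+a+1) ≤ 2*s*(s^2+s+1) := by
    nlinarith [mul_nonneg (sub_nonneg.2 ha) (sq_nonneg s), mul_nonneg (sub_nonneg.2 ha) (sq_nonneg a),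
      mul_nonneg (sub_nonneg.2 ha) (mul_nonneg (by nlinarith : (0:ℝ) ≤ a) (by nlinarith : (0:ℝ) ≤ s))]
  gcongr

private lemma Kle (KB s :ℝ) (hs8 : 8 ≤ s)
    (h : 8*s^3*(s^2+s+1) ≤ KB*((s^2-s-15)*(s^2+3*s+17))) :
    8*s^3*(s^2+s+1)/((s^2-s-15)*(s^2+3*s+17)) ≤ KB := by
  rw [div_le_iff₀ (by nlinarith [sq_nonneg s] : (0:ℝ) < (s^2-s-15)*(s^2+3*s+17))]
  exact h

set_option maxHeartbeats 1000000 in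
private lemma core (s c0 m K R : ℝ) (hs : 43/5 ≤ s)
    (hc0 : c0 = 1 + 1/(2*s*(s^2+s+1)))
    (hm : m = 2*s/(s^2+s+1))
    (hK : K = 8*s^3*(s^2+s+1)/((s^2-s-15)*(s^2+3*s+17)))
    (hR : R = 2*s*(s^2-s+1)) :
    c0^(512:ℕ) * (m/(383/256))^(256:ℕ) * (K/(383/256))^(127:ℕ) * R^(2:ℕ) < 1 := by
  have hs8 : (8:ℝ) ≤ s := by linarith
  have hs0 : (0:ℝ) < s := by linarith
  have hQ : (0:ℝ) < (s^2-s-15)*(s^2+3*s+17) := by nlinarith [sq_nonneg s]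
  have hm0 : 0 ≤ m := by rw [hm]; positivity
  have hK0 : 0 ≤ K := by rw [hK]; positivity
  have hR0 : 0 ≤ R := by rw [hR]; nlinarith [sq_nonneg (s-1)]
  have hc00 : 0 ≤ c0 := by rw [hc0]; positivity
  have main : ∀ A M KB RB : ℝ, c0 ≤ A → m ≤ M → K ≤ KB → R ≤ RB →
      A^(512:ℕ) * (M/(383/256))^(256:ℕ) * (KB/(383/256))^(127:ℕ) * RB^(2:ℕ) < 1 →
      c0^(512:ℕ) * (m/(383/256))^(256:ℕ) * (K/(383/256))^(127:ℕ) * R^(2:ℕ) < 1 := by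
    intro A M KB RB h1 h2 h3 h4 h5
    refine lt_of_le_of_lt (prod4_le ?_ ?_ ?_ ?_ ?_ ?_ ?_ ?_) h5
    · exact pow_nonneg hc00 _
    · positivity
    · positivity
    · exact pow_nonneg hR0 _
    · exact pow_le_pow_left₀ hc00 h1 _
    · exact pow_le_pow_left₀ (by positivity) (by gcongr) _
    · exact pow_le_pow_left₀ (by positivity) (by gcongr) _
    · exact pow_le_pow_left₀ hR0 h4 _
  rcases le_or_gt s (217/25) with hb|hb
  · refine main (179779/179654) (430/2089) (1447975825352/19908590175) (18353426/15625) ?_ ?_ ?_ ?_ (by rw [show (512:ℕ) = 256*2 from rfl, pow_mul]; norm_num)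
    · rw [hc0]; refine le_trans (c0le (43/5) s hs (by norm_num)) (by norm_num)
    · rw [hm]; refine le_trans (mle (43/5) s hs (by norm_num)) (by norm_num)
    · rw [hK]; exact Kle _ s hs8 (by nlinarith [mul_nonneg (sub_nonneg.2 hs) (sub_nonneg.2 hb), mul_nonneg (mul_nonneg (sub_nonneg.2 hs) (sub_nonneg.2 hb)) (sq_nonneg s), mul_nonneg (sub_nonneg.2 hb) (sq_nonneg s), mul_nonneg (sub_nonneg.2 hs) (sq_nonneg s), mul_nonneg (mul_nonneg (sub_nonneg.2 hb) (sq_nonneg s)) hs0.le])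
    · rw [hR]; refine le_trans (Rle (217/25) s hb (by linarith)) (by norm_num)
  rcases le_or_gt s (222/25) with hb2|hb2
  · refine main (23077951/23062326) (10850/53139) (1618078882752/21920755675) (19695396/15625) ?_ ?_ ?_ ?_ (by rw [show (512:ℕ) = 256*2 from rfl, pow_mul]; norm_num)
    · rw [hc0]; refine le_trans (c0le (217/25) s hb.le (by norm_num)) (by norm_num)
    · rw [hm]; refine le_trans (mle (217/25) s hb.le (by norm_num)) (by norm_num)
    · rw [hK]; exact Kle _ s hs8 (by nlinarith [mul_nonneg (sub_nonneg.2 hb.le) (sub_nonneg.2 hb2), mul_nonneg (mul_nonneg (sub_nonneg.2 hb.le) (sub_nonneg.2 hb2)) (sq_nonneg s), mul_nonneg (sub_nonneg.2 hb2) (sq_nonneg s), mul_nonneg (sub_nonneg.2 hb.le) (sq_nonneg s), mul_nonneg (mul_nonneg (sub_nonneg.2 hb2) (sq_nonneg s)) hs0.le])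
    · rw [hR]; refine le_trans (Rle (222/25) s hb2 (by linarith)) (by norm_num)
  rcases le_or_gt s (469/50) with hb3|hb3
  · refine main (24639421/24623796) (11100/55459) (101474396087596/1323015248025) (93336159/62500) ?_ ?_ ?_ ?_ (by rw [show (512:ℕ) = 256*2 from rfl, pow_mul]; norm_num)
    · rw [hc0]; refine le_trans (c0le (222/25) s hb2.le (by norm_num)) (by norm_num)
    · rw [hm]; refine le_trans (mle (222/25) s hb2.le (by norm_num)) (by norm_num)
    · rw [hK]; exact Kle _ s hs8 (by nlinarith [mul_nonneg (sub_nonneg.2 hb2.le) (sub_nonneg.2 hb3), mul_nonneg (mul_nonneg (sub_nonneg.2 hb2.le) (sub_nonneg.2 hb3)) (sq_nonneg s), mul_nonneg (sub_nonneg.2 hb3) (sq_nonneg s), mul_nonneg (sub_nonneg.2 hb2.le) (sq_nonneg s), mul_nonneg (mul_nonneg (sub_nonneg.2 hb3) (sq_nonneg s)) hs0.le])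
    · rw [hR]; refine le_trans (Rle (469/50) s hb3 (by linarith)) (by norm_num)
  rcases le_or_gt s (527/50) with hb4|hb4
  · refine main (115394759/115332259) (46900/245911) (3519363002428/41861467275) (133794233/62500) ?_ ?_ ?_ ?_ (by rw [show (512:ℕ) = 256*2 from rfl, pow_mul]; norm_num)
    · rw [hc0]; refine le_trans (c0le (469/50) s hb3.le (by norm_num)) (by norm_num)
    · rw [hm]; refine le_trans (mle (469/50) s hb3.le (by norm_num)) (by norm_num)
    · rw [hK]; exact Kle _ s hs8 (by nlinarith [mul_nonneg (sub_nonneg.2 hb3.le) (sub_nonneg.2 hb4), mul_nonneg (mul_nonneg (sub_nonneg.2 hb3.le) (sub_nonneg.2 hb4)) (sq_nonneg s), mul_nonneg (sub_nonneg.2 hb4) (sq_nonneg s), mul_nonneg (sub_nonneg.2 hb3.le) (sq_nonneg s), mul_nonneg (mul_nonneg (sub_nonneg.2 hb4) (sq_nonneg s)) hs0.le])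
    · rw [hR]; refine le_trans (Rle (527/50) s hb4 (by linarith)) (by norm_num)
  rcases le_or_gt s 12 with hb5|hb5
  · refine main (161629633/161567133) (52700/306579) (241152/2561) 3192 ?_ ?_ ?_ ?_ (by rw [show (512:ℕ) = 256*2 from rfl, pow_mul]; norm_num)
    · rw [hc0]; refine le_trans (c0le (527/50) s hb4.le (by norm_num)) (by norm_num)
    · rw [hm]; refine le_trans (mle (527/50) s hb4.le (by norm_num)) (by norm_num)
    · rw [hK]; exact Kle _ s hs8 (by nlinarith [mul_nonneg (sub_nonneg.2 hb4.le) (sub_nonneg.2 hb5), mul_nonneg (mul_nonneg (sub_nonneg.2 hb4.le) (sub_nonneg.2 hb5)) (sq_nonneg s), mul_nonneg (sub_nonneg.2 hb5) (sq_nonneg s), mul_nonneg (sub_nonneg.2 hb4.le) (sq_nonneg s), mul_nonneg (mul_nonneg (sub_nonneg.2 hb5) (sq_nonneg s)) hs0.le])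
    · rw [hR]; refine le_trans (Rle 12 s hb5 (by linarith)) (by norm_num)
  · -- tail s > 12
    have h12 : (12:ℝ) ≤ s := hb5.le
    have hc' : c0 ≤ 3769/3768 := by
      rw [hc0]; refine le_trans (c0le 12 s h12 (by norm_num)) (by norm_num)
    have hm' : m ≤ 2/s := by
      rw [hm, div_le_div_iff₀ (by nlinarith) hs0]; nlinarith
    have hK' : K ≤ 8*s := by
      rw [hK, div_le_iff₀ hQ]
      nlinarith [mul_nonneg (sub_nonneg.2 h12) (sq_nonneg s), mul_nonneg (sub_nonneg.2 h12) hs0.le]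
    have hR' : R ≤ 2*s^3 := by rw [hR]; nlinarith
    have key : ((3769:ℝ)/3768)^(512:ℕ) * (512/383)^(256:ℕ) * (2048/383)^(127:ℕ) * 2^(2:ℕ) < 12^(123:ℕ) := by rw [show (512:ℕ) = 256*2 from rfl, pow_mul]; norm_num
    have hs123 : (12:ℝ)^(123:ℕ) ≤ s^(123:ℕ) := pow_le_pow_left₀ (by norm_num) h12 _
    have step1 : c0^(512:ℕ) * (m/(383/256))^(256:ℕ) * (K/(383/256))^(127:ℕ) * R^(2:ℕ)
        ≤ (3769/3768)^(512:ℕ) * ((2/s)/(383/256))^(256:ℕ) * ((8*s)/(383/256))^(127:ℕ) * (2*s^3)^(2:ℕ) := by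
      refine prod4_le (pow_nonneg hc00 _) (pow_nonneg (by positivity) _) (pow_nonneg (by positivity) _) (pow_nonneg hR0 _)
        (pow_le_pow_left₀ hc00 hc' _) (pow_le_pow_left₀ (by positivity) (by gcongr) _)
        (pow_le_pow_left₀ (by positivity) (by gcongr) _) (pow_le_pow_left₀ hR0 hR' _)
    have step2 : ((3769:ℝ)/3768)^(512:ℕ) * ((2/s)/(383/256))^(256:ℕ) * ((8*s)/(383/256))^(127:ℕ) * (2*s^3)^(2:ℕ)
        = (((3769:ℝ)/3768)^(512:ℕ) * (512/383)^(256:ℕ) * (2048/383)^(127:ℕ) * 2^(2:ℕ)) / s^(123:ℕ) := by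
      rw [show (2/s)/(383/256) = ((512:ℝ)/383)/s by ring, show (8*s)/(383/256) = ((2048:ℝ)/383)*s by ring]
      generalize ((3769:ℝ)/3768)^(512:ℕ) = a
      generalize (512:ℝ)/383 = p
      generalize (2048:ℝ)/383 = q
      field_simp
    refine lt_of_le_of_lt step1 ?_
    rw [step2, div_lt_one (by positivity)]
    exact lt_of_lt_of_le key hs123


private lemma rpnp (X:ℝ) (hX : 0 ≤ X) (r:ℝ) (n k:ℕ) (h : r*(n:ℝ) = (k:ℝ)) :
    (X^(r:ℝ))^(n:ℕ) = X^(k:ℕ) := by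
  rw [← Real.rpow_natCast (X^(r:ℝ)) n, ← Real.rpow_mul hX, h, Real.rpow_natCast]


private lemma sfacts (s:ℝ) (hs : 43/5 ≤ s) :
    0 < s^2+1-(s+16) ∧ 0 < (s^2-s-15)*(s^2+3*s+17) ∧ 0 < s^2-s+1 ∧ 2*s < s^2+s+1 ∧
    1 ≤ 2*s*(s^2-s+1) ∧ 0 < s^2-s-15 ∧ 0 < s^2+3*s+17 := by
  have hs0 : (0:ℝ) < s := by linarith
  refine ⟨by nlinarith, by nlinarith [sq_nonneg s], by nlinarith [sq_nonneg (s-1)],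
    by nlinarith [sq_nonneg (s-1)], by nlinarith [sq_nonneg (s-1)], by nlinarith, by nlinarith⟩

private lemma sK6 (s:ℝ) (hs : 43/5 ≤ s) : (6:ℝ) ≤ 8*s^3*(s^2+s+1)/((s^2-s-15)*(s^2+3*s+17)) := by
  have hs0 : (0:ℝ) < s := by linarith
  rw [le_div_iff₀ (sfacts s hs).2.1]
  nlinarith [mul_nonneg (by nlinarith : (0:ℝ) ≤ s-8) (sq_nonneg s),
    mul_nonneg (mul_nonneg (by nlinarith : (0:ℝ) ≤ s-8) hs0.le) (sq_nonneg s), sq_nonneg s]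

private lemma sKR (s:ℝ) (hs : 43/5 ≤ s) :
    8*s^3*(s^2+s+1)/((s^2-s-15)*(s^2+3*s+17)) ≤ (2*s*(s^2-s+1))^(2:ℕ) := by
  have hs0 : (0:ℝ) < s := by linarith
  rw [div_le_iff₀ (sfacts s hs).2.1]
  have h1 : s^2+s+1 ≤ (s^2-s-15)*(s^2+3*s+17) := by
    nlinarith [sq_nonneg (s-4), sq_nonneg s, mul_nonneg (by nlinarith : (0:ℝ) ≤ s-8) (sq_nonneg s)]
  calc 8*s^3*(s^2+s+1) ≤ (2*s*(s^2-s+1))^2*(s^2+s+1) := by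
        nlinarith [sq_nonneg s, sq_nonneg (s-1), mul_nonneg hs0.le (sq_nonneg (s-1))]
    _ ≤ (2*s*(s^2-s+1))^2*((s^2-s-15)*(s^2+3*s+17)) := by
        nlinarith [sq_nonneg (2*s*(s^2-s+1))]

private lemma sDelta (s:ℝ) (hs : 43/5 ≤ s) : s + 16 < s^2 + 1 := by nlinarith

set_option maxHeartbeats 1600000 in
theorem optimization_product_bound
    (d : ℕ) (hd : 75 ≤ d)
    (ε₀ ε₁ : ℝ)
    (hε₀ : ε₀ = Real.sqrt ((d : ℝ) - 1))
    (hε₁ : ε₁ = Real.sqrt ((d : ℝ) - 1) + 1 / ((d : ℝ) + Real.sqrt ((d : ℝ) - 1))) :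
    ∃ δ : ℝ, ε₀ < δ ∧ δ < (d : ℝ) ∧
      ∀ ε x y z : ℝ,
        ε₀ ≤ ε → ε ≤ ε₁ → (1 : ℝ) / 2 ≤ x → 0 ≤ y → y ≤ 1 / 2 - z →
        0 ≤ z → z ≤ 1 / (δ - ε₀) ^ 2 →
        (2 * ε₀) ^ (x + y + z) * ((ε₀ + ε₁) / (2 * ε₀)) * (ε - ε₀) ^ x *
            ((2 * ε₀ * ((d : ℝ) + ε₀) ^ 2 / (((d : ℝ) - δ) * ((d : ℝ) + 2 * ε₀ + δ))
              * (ε₁ - ε)) / y) ^ (y / 2) *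
            ((d : ℝ) - ε₀) ^ z
          < 1 := by
  have hd75 : (75:ℝ) ≤ (d:ℝ) := by exact_mod_cast hd
  have h740 : (0:ℝ) ≤ (d:ℝ) - 1 := by linarith
  have hε₁' : ε₁ = ε₀ + 1/((d:ℝ)+ε₀) := by rw [hε₁, hε₀]
  clear hε₁
  subst hε₁'
  have hs2 : ε₀^2 = (d:ℝ) - 1 := by rw [hε₀]; exact Real.sq_sqrt h740
  have hs43 : (43:ℝ)/5 ≤ ε₀ := by
    rw [show (43:ℝ)/5 = Real.sqrt ((43/5)^2) from (Real.sqrt_sq (by norm_num)).symm, hε₀]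
    exact Real.sqrt_le_sqrt (by nlinarith)
  clear hε₀
  set s := ε₀ with hsE
  clear_value s
  have hs0 : (0:ℝ) < s := by linarith
  have hD : (d:ℝ) = s^2 + 1 := by linarith
  have hF := sfacts s hs43
  refine ⟨s + 16, by linarith, by linarith [sDelta s hs43], ?_⟩
  intro ε x y z hεl hεu hx hy0 hyz hz0 hzmax
  have hz256 : z ≤ (1:ℝ)/256 := by
    rw [show s + 16 - s = (16:ℝ) from by ring] at hzmax
    norm_num at hzmax
    linarith
  set η := 1/((d:ℝ) + s) with hηdef
  set A := 2 * s * ((d:ℝ) + s) ^ 2 / (((d:ℝ) - (s + 16)) * ((d:ℝ) + 2 * s + (s + 16))) with hAdef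
  set c0 := (s + (s + η)) / (2 * s) with hc0def
  set m := 2*s*η with hmdef
  set KK := 4*s^2*A*η with hKKdef
  set R := 2*s*((d:ℝ) - s) with hRdef
  clear_value η A c0 m KK R
  have hds : (0:ℝ) < (d:ℝ) + s := by linarith
  have hη0 : (0:ℝ) < η := by rw [hηdef]; exact one_div_pos.mpr hds
  have hQ1 : (0:ℝ) < (d:ℝ) - (s + 16) := by linarith [hF.1]
  have hQ2 : (0:ℝ) < (d:ℝ) + 2*s + (s + 16) := by linarith
  have hA0 : (0:ℝ) < A := by
    rw [hAdef]
    exact div_pos (mul_pos (by linarith) (pow_pos hds 2)) (mul_pos hQ1 hQ2)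
  have h2s : (0:ℝ) < 2*s := by linarith
  have hm0 : (0:ℝ) < m := by rw [hmdef]; exact mul_pos h2s hη0
  have hKK0 : (0:ℝ) < KK := by
    rw [hKKdef]
    exact mul_pos (mul_pos (mul_pos (by norm_num) (pow_pos hs0 2)) hA0) hη0
  have hdm : (0:ℝ) < (d:ℝ) - s := by linarith [hF.2.2.1]
  have hR0 : (0:ℝ) < R := by rw [hRdef]; exact mul_pos h2s hdm
  have hc00 : (0:ℝ) ≤ c0 := by
    rw [hc0def]
    exact div_nonneg (by linarith) (by linarith)
  -- s-normal forms
  have hne1 : ((d:ℝ) + s) ≠ 0 := ne_of_gt hds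
  have hne2 : s ≠ 0 := ne_of_gt hs0
  have hne3 : s^2+1+s ≠ 0 := ne_of_gt (by linarith [sq_nonneg s] : (0:ℝ) < s^2+1+s)
  have hne4 : s^2+1-(s+16) ≠ 0 := ne_of_gt hF.1
  have hne5 : s^2+1+2*s+(s+16) ≠ 0 := by intro h; nlinarith [hF.1]
  have hne6 : s^2-s-15 ≠ 0 := ne_of_gt hF.2.2.2.2.2.1
  have hne7 : s^2+3*s+17 ≠ 0 := ne_of_gt hF.2.2.2.2.2.2
  have hc0eq : c0 = 1 + 1/(2*s*(s^2+s+1)) := by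
    rw [hc0def, hηdef, hD]
    field_simp
    ring
  have hmeq : m = 2*s/(s^2+s+1) := by
    rw [hmdef, hηdef, hD]
    field_simp
    ring
  have hKKeq : KK = 8*s^3*(s^2+s+1)/((s^2-s-15)*(s^2+3*s+17)) := by
    rw [hKKdef, hAdef, hηdef, hD]
    rw [show s^2+1-(s+16) = s^2-s-15 from by ring, show s^2+1+2*s+(s+16) = s^2+3*s+17 from by ring]
    field_simp
    ring
  have hReq : R = 2*s*(s^2-s+1) := by rw [hRdef, hD]; ring
  -- key scalar facts
  have hK6 : (6:ℝ) ≤ KK := by rw [hKKeq]; exact sK6 s hs43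
  have hKR : KK ≤ R^(2:ℕ) := by rw [hKKeq, hReq]; exact sKR s hs43
  have hR1 : (1:ℝ) ≤ R := by rw [hReq]; linarith [hF.2.2.2.2.1]
  have hm1 : m ≤ 1 := by
    rw [hmeq, div_le_one (by linarith [hF.2.2.2.1])]
    linarith [hF.2.2.2.1]
  have hmY : (0:ℝ) ≤ m/(383/256) := div_nonneg hm0.le (by norm_num)
  have hKY : (0:ℝ) ≤ KK/(383/256) := div_nonneg hKK0.le (by norm_num)
  -- the target bound B1 and its smallness
  have claimC : c0 * (m/(383/256))^((1:ℝ)/2) * (KK/(383/256))^((127:ℝ)/512) * R^((1:ℝ)/256) < 1 := by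
    have hcore := core s c0 m KK R hs43 hc0eq hmeq hKKeq hReq
    have hpow : (c0 * (m/(383/256))^((1:ℝ)/2) * (KK/(383/256))^((127:ℝ)/512) * R^((1:ℝ)/256))^(512:ℕ)
        = c0^(512:ℕ) * (m/(383/256))^(256:ℕ) * (KK/(383/256))^(127:ℕ) * R^(2:ℕ) := by
      rw [mul_pow, mul_pow, mul_pow,
        rpnp (m/(383/256)) hmY ((1:ℝ)/2) 512 256 (by norm_num),
        rpnp (KK/(383/256)) hKY ((127:ℝ)/512) 512 127 (by norm_num),
        rpnp R hR0.le ((1:ℝ)/256) 512 2 (by norm_num)]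
    have hB10 : (0:ℝ) ≤ c0 * (m/(383/256))^((1:ℝ)/2) * (KK/(383/256))^((127:ℝ)/512) * R^((1:ℝ)/256) :=
      mul_nonneg (mul_nonneg (mul_nonneg hc00 (Real.rpow_nonneg hmY _)) (Real.rpow_nonneg hKY _)) (Real.rpow_nonneg hR0.le _)
    have hlt : (c0 * (m/(383/256))^((1:ℝ)/2) * (KK/(383/256))^((127:ℝ)/512) * R^((1:ℝ)/256))^(512:ℕ) < 1 := by
      rw [hpow]; exact hcore
    exact (pow_lt_one_iff_of_nonneg hB10 (by norm_num)).1 hlt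
  -- claim B : intermediate bound ≤ B1
  have claimB : c0 * (m/(1+y))^((1:ℝ)/2) * (KK/(1+y))^(y/2) * R^z
      ≤ c0 * (m/(383/256))^((1:ℝ)/2) * (KK/(383/256))^((127:ℝ)/512) * R^((1:ℝ)/256) := by
    have h1y : (0:ℝ) < 1+y := by linarith
    have hm1y : (0:ℝ) ≤ m/(1+y) := div_nonneg hm0.le h1y.le
    have hK1y : (0:ℝ) ≤ KK/(1+y) := div_nonneg hKK0.le h1y.le
    rcases le_or_gt y (127/256) with hyc|hyc
    · have hf := fmono m KK y (127/256) hm0 hK6 hy0 hyc (by norm_num)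
      rw [show (1:ℝ)+127/256 = 383/256 from by norm_num,
          show (127:ℝ)/256/2 = 127/512 from by norm_num] at hf
      have hRz : R^z ≤ R^((1:ℝ)/256) := Real.rpow_le_rpow_of_exponent_le hR1 hz256
      calc c0 * (m/(1+y))^((1:ℝ)/2) * (KK/(1+y))^(y/2) * R^z
          = c0 * ((m/(1+y))^((1:ℝ)/2) * (KK/(1+y))^(y/2)) * R^z := by ring
        _ ≤ c0 * ((m/(383/256))^((1:ℝ)/2) * (KK/(383/256))^((127:ℝ)/512)) * R^((1:ℝ)/256) := by
            apply mul_le_mul (mul_le_mul_of_nonneg_left hf hc00) hRz (Real.rpow_nonneg hR0.le _)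
            exact mul_nonneg hc00 (mul_nonneg (Real.rpow_nonneg hmY _) (Real.rpow_nonneg hKY _))
        _ = c0 * (m/(383/256))^((1:ℝ)/2) * (KK/(383/256))^((127:ℝ)/512) * R^((1:ℝ)/256) := by ring
    · have hy12 : y ≤ 1/2 := by linarith
      have hy383 : (383:ℝ)/256 ≤ 1+y := by linarith
      have p1 : (m/(1+y))^((1:ℝ)/2) ≤ (m/(383/256))^((1:ℝ)/2) := by
        apply Real.rpow_le_rpow hm1y ?_ (by norm_num)
        rw [div_le_div_iff₀ h1y (by norm_num)]
        have := mul_le_mul_of_nonneg_left hy383 hm0.le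
        linarith
      have p2 : (KK/(1+y))^(y/2) ≤ (KK/(383/256))^(y/2) := by
        apply Real.rpow_le_rpow hK1y ?_ (by linarith)
        rw [div_le_div_iff₀ h1y (by norm_num)]
        have := mul_le_mul_of_nonneg_left hy383 hKK0.le
        linarith
      have hb0 : (0:ℝ) < KK/(383/256) := div_pos hKK0 (by norm_num)
      have p3 : (KK/(383/256))^(y/2) = (KK/(383/256))^((127:ℝ)/512) * (KK/(383/256))^(y/2 - 127/512) := by
        rw [← Real.rpow_add hb0]
        congr 1
        ring
      have p4 : (KK/(383/256))^(y/2 - 127/512) ≤ R^(y - 127/256) := by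
        have hbase : KK/(383/256) ≤ R^(2:ℕ) :=
          le_trans (div_le_self hKK0.le (by norm_num)) hKR
        calc (KK/(383/256))^(y/2 - 127/512) ≤ (R^(2:ℕ))^(y/2 - 127/512) :=
              Real.rpow_le_rpow hb0.le hbase (by linarith)
          _ = R^(y - 127/256) := by
              rw [← Real.rpow_natCast R 2, ← Real.rpow_mul hR0.le]
              congr 1
              push_cast
              ring
      have p5 : R^z ≤ R^(1/2 - y) := Real.rpow_le_rpow_of_exponent_le hR1 (by linarith)
      have p6 : R^(y - 127/256) * R^(1/2 - y) = R^((1:ℝ)/256) := by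
        rw [← Real.rpow_add hR0]
        congr 1
        ring
      have pF2 : (KK/(1+y))^(y/2) ≤ (KK/(383/256))^((127:ℝ)/512) * R^(y - 127/256) := by
        calc (KK/(1+y))^(y/2) ≤ (KK/(383/256))^(y/2) := p2
          _ = (KK/(383/256))^((127:ℝ)/512) * (KK/(383/256))^(y/2 - 127/512) := p3
          _ ≤ (KK/(383/256))^((127:ℝ)/512) * R^(y - 127/256) :=
              mul_le_mul_of_nonneg_left p4 (Real.rpow_nonneg hb0.le _)
      calc c0 * (m/(1+y))^((1:ℝ)/2) * (KK/(1+y))^(y/2) * R^z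
          ≤ c0 * (m/(383/256))^((1:ℝ)/2) * ((KK/(383/256))^((127:ℝ)/512) * R^(y - 127/256)) * R^(1/2 - y) :=
            prod4_le hc00 (Real.rpow_nonneg hm1y _) (Real.rpow_nonneg hK1y _)
              (Real.rpow_nonneg hR0.le _) le_rfl p1 pF2 p5
        _ = c0 * (m/(383/256))^((1:ℝ)/2) * (KK/(383/256))^((127:ℝ)/512) * (R^(y - 127/256) * R^(1/2 - y)) := by
            ring
        _ = c0 * (m/(383/256))^((1:ℝ)/2) * (KK/(383/256))^((127:ℝ)/512) * R^((1:ℝ)/256) := by rw [p6]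
  -- now the main reduction
  rcases eq_or_lt_of_le hεl with heq|hεl'
  · -- ε = s : factor (ε-s)^x = 0
    rw [← heq, sub_self, Real.zero_rpow (ne_of_gt (by linarith : (0:ℝ) < x))]
    simp only [mul_zero, zero_mul]
    norm_num
  · have hu0 : (0:ℝ) < ε - s := by linarith
    have hv0 : (0:ℝ) ≤ s + η - ε := by linarith
    have huη : ε - s ≤ η := by linarith
    have h2su1 : 2*s*(ε-s) ≤ 1 := by
      have h1 : 2*s*(ε-s) ≤ 2*s*η := mul_le_mul_of_nonneg_left huη h2s.le
      linarith [hm1, hmdef.ge, hmdef.le]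
    have hy1' : (0:ℝ) ≤ 1+y := by linarith
    have hηy : (0:ℝ) ≤ η/(1+y) := div_nonneg hη0.le hy1'
    have hsplit : (2*s)^(x+y+z) = (2*s)^x*(2*s)^y*(2*s)^z := by
      rw [Real.rpow_add h2s, Real.rpow_add h2s]
    have e_u : (2*s)^x * (ε-s)^x = (2*s*(ε-s))^x := (Real.mul_rpow h2s.le hu0.le).symm
    have b_u : (2*s*(ε-s))^x ≤ (2*s*(ε-s))^((1:ℝ)/2) :=
      Real.rpow_le_rpow_of_exponent_ge (mul_pos h2s hu0) h2su1 hx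
    have e_d : (2*s*(ε-s))^((1:ℝ)/2) = (2*s)^((1:ℝ)/2) * (ε-s)^((1:ℝ)/2) :=
      Real.mul_rpow h2s.le hu0.le
    have e_z : (2*s)^z * ((d:ℝ)-s)^z = R^z := by
      rw [hRdef]; exact (Real.mul_rpow h2s.le hdm.le).symm
    have e_m : (2*s)^((1:ℝ)/2) * (η/(1+y))^((1:ℝ)/2) = (m/(1+y))^((1:ℝ)/2) := by
      rw [← Real.mul_rpow h2s.le hηy]
      congr 1
      rw [hmdef]; ring
    have claimA : (2*s)^(x+y+z) * c0 * (ε-s)^x * (A * (s + η - ε) / y)^(y/2) * ((d:ℝ)-s)^z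
        ≤ c0 * (m/(1+y))^((1:ℝ)/2) * (KK/(1+y))^(y/2) * R^z := by
      rcases eq_or_lt_of_le hy0 with hy|hy
      · -- y = 0
        rw [← hy]
        rw [show (0:ℝ)/2 = 0 from by norm_num, Real.rpow_zero, Real.rpow_zero,
          show x+0+z = x+z from by ring, Real.rpow_add h2s]
        have step : (2*s)^x * (ε-s)^x ≤ (m/(1+0))^((1:ℝ)/2) := by
          rw [e_u]
          refine le_trans b_u ?_
          apply Real.rpow_le_rpow (mul_pos h2s hu0).le ?_ (by norm_num)
          rw [show (1:ℝ)+0 = 1 from by norm_num, div_one, hmdef]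
          exact mul_le_mul_of_nonneg_left huη h2s.le
        calc (2*s)^x * (2*s)^z * c0 * (ε-s)^x * 1 * ((d:ℝ)-s)^z
            = c0 * ((2*s)^x * (ε-s)^x) * ((2*s)^z * ((d:ℝ)-s)^z) := by ring
          _ ≤ c0 * ((m/(1+0))^((1:ℝ)/2)) * ((2*s)^z * ((d:ℝ)-s)^z) := by
              apply mul_le_mul_of_nonneg_right (mul_le_mul_of_nonneg_left step hc00)
              exact mul_nonneg (Real.rpow_nonneg h2s.le _) (Real.rpow_nonneg hdm.le _)
          _ = c0 * (m/(1+0))^((1:ℝ)/2) * 1 * R^z := by rw [e_z]; ring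
      · -- y > 0
        have hvy0 : (0:ℝ) ≤ (s + η - ε)/y := div_nonneg hv0 hy.le
        have h4s2A : (0:ℝ) ≤ (2*s)^(2:ℕ) * A := mul_nonneg (by positivity) hA0.le
        have e_y : (A * (s + η - ε) / y)^(y/2) = A^(y/2) * ((s + η - ε)/y)^(y/2) := by
          rw [show A * (s + η - ε) / y = A * ((s + η - ε)/y) from by ring]
          exact Real.mul_rpow hA0.le hvy0
        have e_2s : ((2*s)^(2:ℕ) : ℝ)^(y/2) = (2*s)^y := by
          rw [← Real.rpow_natCast (2*s) 2, ← Real.rpow_mul h2s.le]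
          congr 1
          push_cast
          ring
        have e_K : ((2*s)^(2:ℕ) * A)^(y/2) * (η/(1+y))^(y/2) = (KK/(1+y))^(y/2) := by
          rw [← Real.mul_rpow h4s2A hηy]
          congr 1
          rw [hKKdef]
          ring
        have e_CA : ((2*s)^(2:ℕ) * A)^(y/2) = (2*s)^y * A^(y/2) := by
          rw [Real.mul_rpow (by positivity) hA0.le, e_2s]
        have hgm := amgm (ε-s) (s+η-ε) y η hu0.le hv0 hy (by ring) hη0
        calc (2*s)^(x+y+z) * c0 * (ε-s)^x * (A * (s + η - ε) / y)^(y/2) * ((d:ℝ)-s)^z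
            = c0 * ((2*s)^x * (ε-s)^x) * ((2*s)^y * (A^(y/2) * ((s+η-ε)/y)^(y/2))) * ((2*s)^z * ((d:ℝ)-s)^z) := by
              rw [hsplit, e_y]; ring
          _ = c0 * ((2*s*(ε-s))^x) * (((2*s)^(2:ℕ)*A)^(y/2) * ((s+η-ε)/y)^(y/2)) * R^z := by
              rw [e_u, e_z, e_CA]; ring
          _ ≤ c0 * ((2*s*(ε-s))^((1:ℝ)/2)) * (((2*s)^(2:ℕ)*A)^(y/2) * ((s+η-ε)/y)^(y/2)) * R^z := by
              apply mul_le_mul_of_nonneg_right ?_ (Real.rpow_nonneg hR0.le _)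
              apply mul_le_mul_of_nonneg_right (mul_le_mul_of_nonneg_left b_u hc00)
              exact mul_nonneg (Real.rpow_nonneg h4s2A _) (Real.rpow_nonneg hvy0 _)
          _ = c0 * (((2*s)^(2:ℕ)*A)^(y/2) * (2*s)^((1:ℝ)/2)) * ((ε-s)^((1:ℝ)/2) * ((s+η-ε)/y)^(y/2)) * R^z := by
              rw [e_d]; ring
          _ ≤ c0 * (((2*s)^(2:ℕ)*A)^(y/2) * (2*s)^((1:ℝ)/2)) * ((η/(1+y))^((1:ℝ)/2) * (η/(1+y))^(y/2)) * R^z := by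
              apply mul_le_mul_of_nonneg_right ?_ (Real.rpow_nonneg hR0.le _)
              apply mul_le_mul_of_nonneg_left hgm
              exact mul_nonneg hc00 (mul_nonneg (Real.rpow_nonneg h4s2A _) (Real.rpow_nonneg h2s.le _))
          _ = c0 * ((2*s)^((1:ℝ)/2) * (η/(1+y))^((1:ℝ)/2)) * (((2*s)^(2:ℕ)*A)^(y/2) * (η/(1+y))^(y/2)) * R^z := by
              ring
          _ = c0 * (m/(1+y))^((1:ℝ)/2) * (KK/(1+y))^(y/2) * R^z := by
              rw [e_m, e_K]
    calc (2*s)^(x+y+z) * c0 * (ε-s)^x * (A * (s + η - ε) / y)^(y/2) * ((d:ℝ)-s)^z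
        ≤ c0 * (m/(1+y))^((1:ℝ)/2) * (KK/(1+y))^(y/2) * R^z := claimA
      _ ≤ c0 * (m/(383/256))^((1:ℝ)/2) * (KK/(383/256))^((127:ℝ)/512) * R^((1:ℝ)/256) := claimB
      _ < 1 := claimC
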